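/- Let m ≥ 1 and B ≥ 1 be integers, let A be a finite set, and let s : A → ℕ satisfy s(a) ≥ 1 for all a ∈ A and Σ_{a∈A} s(a) = mB. Let X be a finite set of variables equipped with maps p : X → {1,…,m} and q : X → A such that every fiber p⁻¹(i) has exactly B elements and every fiber q⁻¹(a) has exactly s(a) elements, and let f and t be two distinct fresh variables not in X. Define Boolean functions over X ∪ {f,t} by S''(α) = ¬α(f) ∧ α(t) ∧ (α is constant on every fiber of p) and U''(α) = ¬α(f) ∧ α(t) ∧ (α is constant on every fiber of q). Then S'' isomorphically implies U'' if and only if there is a map c : A → {1,…,m} such that Σ_{a : c(a)=i} s(a) = B for every i ∈ {1,…,m}. -/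

import Mathlib

/-- Like STATEMENT 10 but with distinct fresh variables `f`, `t` (modeled as
`Sum.inr false`, `Sum.inr true` in `X ⊕ Bool`),
`S''(α) = ¬α(f) ∧ α(t) ∧ (α constant on fibers of p)` and
`U''(α) = ¬α(f) ∧ α(t) ∧ (α constant on fibers of q)`: `S'' ⇒̃ U''` iff `A` can be
partitioned via `c : A → Fin m` so that each part has total size `B`. -/
theorem stmt_12 (m B : ℕ) (hm : 1 ≤ m) (hB : 1 ≤ B)
    {A : Type*} [Fintype A] [DecidableEq A] (s : A → ℕ)
    (hs : ∀ a : A, 1 ≤ s a) (hsum : ∑ a : A, s a = m * B)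
    {X : Type*} [Fintype X] [DecidableEq X] (p : X → Fin m) (q : X → A)
    (hp : ∀ i : Fin m, (Finset.univ.filter fun x => p x = i).card = B)
    (hq : ∀ a : A, (Finset.univ.filter fun x => q x = a).card = s a)
    (S'' U'' : (X ⊕ Bool → Bool) → Bool)
    (hS'' : ∀ α : X ⊕ Bool → Bool, S'' α = true ↔
      (α (Sum.inr false) = false ∧ α (Sum.inr true) = true ∧
        ∀ x x' : X, p x = p x' → α (Sum.inl x) = α (Sum.inl x')))
    (hU'' : ∀ α : X ⊕ Bool → Bool, U'' α = true ↔
      (α (Sum.inr false) = false ∧ α (Sum.inr true) = true ∧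
        ∀ x x' : X, q x = q x' → α (Sum.inl x) = α (Sum.inl x'))) :
    (∃ π : Equiv.Perm (X ⊕ Bool), ∀ α : X ⊕ Bool → Bool, S'' (α ∘ π) = true → U'' α = true) ↔
      (∃ c : A → Fin m, ∀ i : Fin m, ∑ a ∈ Finset.univ.filter fun a => c a = i, s a = B) := by
  constructor
  · rintro ⟨π, h⟩
    -- For every valuation v of the p-fibers, the assignment β_v satisfies S'',
    -- hence β_v ∘ π.symm satisfies U''.
    have key : ∀ v : Fin m → Bool,
        (Sum.elim (fun x => v (p x)) id (π.symm (Sum.inr false)) = false ∧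
         Sum.elim (fun x => v (p x)) id (π.symm (Sum.inr true)) = true ∧
         ∀ x x' : X, q x = q x' →
           Sum.elim (fun x => v (p x)) id (π.symm (Sum.inl x)) =
           Sum.elim (fun x => v (p x)) id (π.symm (Sum.inl x'))) := by
      intro v
      have hsat : S'' (((Sum.elim (fun x => v (p x)) id) ∘ ⇑π.symm) ∘ ⇑π) = true := by
        rw [hS'']
        refine ⟨?_, ?_, ?_⟩ <;> simp [Function.comp]
        intro x x' hxx'
        rw [hxx']
      have := h _ hsat
      rw [hU''] at this
      exact this
    have fixf : π.symm (Sum.inr false) = Sum.inr false := by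
      rcases hx : π.symm (Sum.inr false) with x | b
      · have := (key (fun _ => true)).1
        rw [hx] at this; simp at this
      · have := (key (fun _ => true)).1
        rw [hx] at this; simp at this; rw [this]
    have fixt : π.symm (Sum.inr true) = Sum.inr true := by
      rcases hx : π.symm (Sum.inr true) with x | b
      · have := (key (fun _ => false)).2.1
        rw [hx] at this; simp at this
      · have := (key (fun _ => false)).2.1
        rw [hx] at this; simp at this; rw [this]
    have hτex : ∀ x : X, ∃ y : X, π.symm (Sum.inl x) = Sum.inl y := by
      intro x
      rcases hx : π.symm (Sum.inl x) with y | b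
      · exact ⟨y, rfl⟩
      · exfalso
        cases b
        · have : (Sum.inl x : X ⊕ Bool) = Sum.inr false :=
            π.symm.injective (hx.trans fixf.symm)
          exact Sum.inl_ne_inr this
        · have : (Sum.inl x : X ⊕ Bool) = Sum.inr true :=
            π.symm.injective (hx.trans fixt.symm)
          exact Sum.inl_ne_inr this
    choose τ hτ using hτex
    have hτinj : Function.Injective τ := by
      intro x x' hxx'
      have : π.symm (Sum.inl x) = π.symm (Sum.inl x') := by
        rw [hτ, hτ, hxx']
      exact Sum.inl_injective (π.symm.injective this)
    -- p ∘ τ is constant on q-fibers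
    have const : ∀ x x' : X, q x = q x' → p (τ x) = p (τ x') := by
      intro x x' hxx'
      have := (key (fun j => decide (j = p (τ x)))).2.2 x x' hxx'
      rw [hτ, hτ] at this
      simp at this
      exact this.symm
    -- pick a representative in each q-fiber
    have hne : ∀ a : A, ∃ x : X, q x = a := by
      intro a
      have hpos : 0 < (Finset.univ.filter fun x => q x = a).card := by
        rw [hq]; exact hs a
      obtain ⟨x, hx⟩ := Finset.card_pos.mp hpos
      exact ⟨x, (Finset.mem_filter.mp hx).2⟩
    choose w hw using hne
    refine ⟨fun a => p (τ (w a)), ?_⟩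
    intro i
    have hpc : ∀ x : X, p (τ (w (q x))) = p (τ x) := fun x => const _ _ (hw _)
    -- count
    have step1 : (Finset.univ.filter fun x => p (τ (w (q x))) = i).card =
        ∑ a ∈ Finset.univ.filter fun a => p (τ (w a)) = i, s a := by
      rw [Finset.card_eq_sum_card_fiberwise
        (f := q) (t := Finset.univ.filter fun a => p (τ (w a)) = i)
        (fun x hx => by
          simp only [Finset.mem_coe, Finset.mem_filter, Finset.mem_univ, true_and] at hx ⊢
          exact hx)]
      refine Finset.sum_congr rfl ?_
      intro a ha
      simp only [Finset.mem_filter, Finset.mem_univ, true_and] at ha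
      rw [← hq a]
      congr 1
      ext x
      simp only [Finset.mem_filter, Finset.mem_univ, true_and, Finset.filter_filter]
      constructor
      · rintro ⟨_, h2⟩; exact h2
      · intro h2; exact ⟨by rw [h2, ha], h2⟩
    have step2 : (Finset.univ.filter fun x => p (τ (w (q x))) = i) =
        (Finset.univ.filter fun x => p (τ x) = i) := by
      ext x
      simp [hpc x]
    have step3 : (Finset.univ.filter fun x => p (τ x) = i).card =
        (Finset.univ.filter fun x => p x = i).card := by
      have hbij : Function.Bijective τ := Finite.injective_iff_bijective.mp hτinj
      refine Finset.card_bij (fun x _ => τ x) ?_ ?_ ?_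
      · intro x hx
        simp only [Finset.mem_filter, Finset.mem_univ, true_and] at hx ⊢
        exact hx
      · intro x _ x' _ hxx'; exact hτinj hxx'
      · intro y hy
        obtain ⟨x, rfl⟩ := hbij.2 y
        simp only [Finset.mem_filter, Finset.mem_univ, true_and] at hy
        exact ⟨x, by simp [hy], rfl⟩
    rw [← step1, step2, step3, hp]
  · rintro ⟨c, hc⟩
    have hcard : ∀ i : Fin m, (Finset.univ.filter fun x => c (q x) = i).card = B := by
      intro i
      rw [Finset.card_eq_sum_card_fiberwise
        (f := q) (t := Finset.univ.filter fun a => c a = i)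
        (fun x hx => by
          simp only [Finset.mem_coe, Finset.mem_filter, Finset.mem_univ, true_and] at hx ⊢
          exact hx)]
      rw [← hc i]
      refine Finset.sum_congr rfl ?_
      intro a ha
      simp only [Finset.mem_filter, Finset.mem_univ, true_and] at ha
      rw [← hq a]
      congr 1
      ext x
      simp only [Finset.mem_filter, Finset.mem_univ, true_and, Finset.filter_filter]
      constructor
      · rintro ⟨_, h2⟩; exact h2
      · intro h2; exact ⟨by rw [h2, ha], h2⟩
    -- build σ : X ≃ X with c (q (σ x)) = p x
    let e : ∀ i : Fin m, {x // p x = i} ≃ {x // c (q x) = i} := fun i =>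
      Fintype.equivOfCardEq (by
        rw [Fintype.card_subtype, Fintype.card_subtype, hp, hcard])
    let σ : X ≃ X := (Equiv.sigmaFiberEquiv p).symm.trans
      ((Equiv.sigmaCongrRight e).trans (Equiv.sigmaFiberEquiv fun x => c (q x)))
    have hσ : ∀ x : X, c (q (σ x)) = p x := by
      intro x
      have hrfl : σ x = (e (p x) ⟨x, rfl⟩).val := rfl
      rw [hrfl]
      exact (e (p x) ⟨x, rfl⟩).2
    refine ⟨Equiv.sumCongr σ (Equiv.refl Bool), ?_⟩
    intro α hα
    rw [hS''] at hα
    rw [hU'']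
    obtain ⟨h1, h2, h3⟩ := hα
    simp only [Function.comp, Equiv.sumCongr_apply, Sum.map_inr, Sum.map_inl,
      Equiv.refl_apply, id] at h1 h2 h3
    refine ⟨h1, h2, ?_⟩
    intro y y' hqy
    have hpy : p (σ.symm y) = p (σ.symm y') := by
      have e1 := hσ (σ.symm y)
      have e2 := hσ (σ.symm y')
      rw [Equiv.apply_symm_apply] at e1 e2
      rw [← e1, ← e2, hqy]
    have := h3 (σ.symm y) (σ.symm y') hpy
    rwa [Equiv.apply_symm_apply, Equiv.apply_symm_apply] at this
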